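/- Let F ⊆ E be number fields with E a quadratic extension of F, with rings of integers O_F and O_E, and let 𝔞 be a nonzero ideal of O_F. Then the number of ideals 𝔟 of O_E whose relative norm N_{E/F}(𝔟) equals 𝔞 is at most σ₀(N(𝔞))^{[F:ℚ]}, where N(𝔞) is the absolute norm of 𝔞 and σ₀(x) denotes the number of positive divisors of the positive integer x. -/

import Mathlib

open NumberField

set_option synthInstance.maxHeartbeats 1000000
set_option maxHeartbeats 3000000

section Aux

open Ideal Polynomial UniqueFactorizationMonoid
open scoped nonZeroDivisors

/-- A field extension of degree two is normal. -/
theorem RelNormAux.normal_of_finrank_eq_two (F E : Type*) [Field F] [Field E] [Algebra F E]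
    [FiniteDimensional F E] (h2 : Module.finrank F E = 2) : Normal F E := by
  rw [normal_iff]
  intro x
  have hx : IsIntegral F x := Algebra.IsIntegral.isIntegral x
  refine ⟨hx, ?_⟩
  have hdvd := minpoly.degree_dvd hx
  rw [h2] at hdvd
  have hne : minpoly F x ≠ 0 := minpoly.ne_zero hx
  rcases (Nat.le_of_dvd (by omega) hdvd).lt_or_eq with hd | hd
  · exact Polynomial.Splits.of_natDegree_le_one (by rw [Polynomial.natDegree_map]; omega)
  · have hroot : Polynomial.IsRoot ((minpoly F x).map (algebraMap F E)) x := by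
      simpa [Polynomial.IsRoot, Polynomial.eval_map, ← Polynomial.aeval_def] using
        minpoly.aeval F x
    obtain ⟨q, hq⟩ := (Polynomial.dvd_iff_isRoot.mpr hroot)
    rw [hq]
    have hq0 : q ≠ 0 := by
      intro h; rw [h, mul_zero] at hq
      exact (Polynomial.map_ne_zero hne) hq
    have hdeg : ((minpoly F x).map (algebraMap F E)).natDegree = 2 := by
      rw [Polynomial.natDegree_map]; exact hd
    have hqdeg : q.natDegree = 1 := by
      have := Polynomial.natDegree_mul (Polynomial.X_sub_C_ne_zero x) hq0
      rw [← hq, Polynomial.natDegree_X_sub_C] at this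
      omega
    exact (Polynomial.Splits.X_sub_C _).mul
      (Polynomial.Splits.of_natDegree_le_one (by omega))

/-- The determinant of a matrix with entries in an ideal `𝔞` lies in `𝔞 ^ card`. -/
theorem RelNormAux.det_mem_pow_card {R ι : Type*} [CommRing R] [Fintype ι] [DecidableEq ι]
    (𝔞 : Ideal R) (M : Matrix ι ι R) (h : ∀ i j, M i j ∈ 𝔞) :
    M.det ∈ 𝔞 ^ Fintype.card ι := by
  rw [Matrix.det_apply]
  refine Ideal.sum_mem _ fun σ _ => zsmul_mem ?_ _
  have key : ∀ s : Finset ι, (∏ i ∈ s, M (σ i) i) ∈ 𝔞 ^ s.card := by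
    intro s
    induction s using Finset.induction with
    | empty => simp [Ideal.one_eq_top]
    | insert _ _ hx ih =>
      rw [Finset.prod_insert hx, Finset.card_insert_of_notMem hx, pow_succ, mul_comm]
      exact Ideal.mul_mem_mul (h _ _) ih
  simpa [Finset.card_univ] using key Finset.univ

/-- The norm of an element of the extension of an ideal lies in the power of the ideal. -/
theorem RelNormAux.norm_mem_pow {R S : Type*} [CommRing R] [Nontrivial R] [CommRing S]
    [Algebra R S] [Module.Finite R S] [Module.Free R S]
    (𝔞 : Ideal R) {x : S} (hx : x ∈ Ideal.map (algebraMap R S) 𝔞) :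
    Algebra.norm R x ∈ 𝔞 ^ Module.finrank R S := by
  classical
  let b := Module.Free.chooseBasis R S
  rw [Algebra.norm_eq_matrix_det b, Module.finrank_eq_card_chooseBasisIndex]
  refine RelNormAux.det_mem_pow_card _ _ fun i j => ?_
  have hx' : x ∈ (𝔞 • ⊤ : Submodule R S) := by
    rw [Ideal.smul_top_eq_map]; exact hx
  have key : ∀ y ∈ (𝔞 • ⊤ : Submodule R S), ∀ i j, b.repr (y * b j) i ∈ 𝔞 := by
    intro y hy
    refine Submodule.smul_induction_on hy ?_ ?_
    · intro a ha m _ i j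
      rw [smul_mul_assoc, map_smul]
      exact Ideal.mul_mem_right _ _ ha
    · intro y z hy hz i j
      rw [add_mul, map_add]
      exact Ideal.add_mem _ (hy i j) (hz i j)
  rw [Algebra.leftMulMatrix_eq_repr_mul]
  exact key x hx' i j

/-- The relative norm of the extension of an ideal is the power of that ideal by the rank. -/
theorem RelNormAux.relNorm_map_eq_pow {R S : Type*} [CommRing R] [IsDomain R]
    [IsDedekindDomain R] [CommRing S] [IsDomain S] [IsDedekindDomain S] [Algebra R S]
    [Module.Finite R S] [Module.Free R S] (𝔞 : Ideal R) :
    Ideal.relNorm R (Ideal.map (algebraMap R S) 𝔞) = 𝔞 ^ Module.finrank R S := by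
  classical
  have hb := Module.Free.chooseBasis R S
  have hrank : Module.finrank R S = Fintype.card (Module.Free.ChooseBasisIndex R S) :=
    Module.finrank_eq_card_chooseBasisIndex R S
  have hprin : ∀ β : R, Ideal.relNorm R (Ideal.map (algebraMap R S) (Ideal.span {β}))
      = Ideal.span {β} ^ Module.finrank R S := by
    intro β
    rw [Ideal.map_span, Set.image_singleton, Ideal.relNorm_singleton,
      Algebra.intNorm_eq_norm, Algebra.norm_algebraMap_of_basis hb, Ideal.span_singleton_pow, hrank]
  have hle : ∀ 𝔟 : Ideal R,
      𝔟 ^ Module.finrank R S ∣ Ideal.relNorm R (Ideal.map (algebraMap R S) 𝔟) := by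
    intro 𝔟
    rw [Ideal.dvd_iff_le, Ideal.relNorm_apply, Ideal.span_le]
    rintro _ ⟨x, hx, rfl⟩
    rw [Algebra.intNorm_eq_norm]
    exact RelNormAux.norm_mem_pow 𝔟 hx
  rcases eq_or_ne 𝔞 ⊥ with rfl | h𝔞
  · have hn : Module.finrank R S ≠ 0 := by
      have hpos : 0 < Module.finrank R S := by
        rw [hrank, Fintype.card_pos_iff]
        exact ⟨(Module.Free.chooseBasis R S).index_nonempty.some⟩
      omega
    rw [Ideal.map_bot, Ideal.relNorm_bot, ← Ideal.zero_eq_bot, zero_pow hn]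
  · obtain ⟨β, hβ𝔞, hβ0⟩ := Submodule.exists_mem_ne_zero_of_ne_bot h𝔞
    have hdvd : 𝔞 ∣ Ideal.span {β} :=
      Ideal.dvd_iff_le.mpr ((Ideal.span_singleton_le_iff_mem _).mpr hβ𝔞)
    obtain ⟨𝔠, h𝔠⟩ := hdvd
    obtain ⟨u, hu⟩ := hle 𝔞
    obtain ⟨v, hv⟩ := hle 𝔠
    have hmul : 𝔞 ^ Module.finrank R S * 𝔠 ^ Module.finrank R S * (u * v)
        = 𝔞 ^ Module.finrank R S * 𝔠 ^ Module.finrank R S * 1 := by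
      rw [mul_one]
      calc 𝔞 ^ Module.finrank R S * 𝔠 ^ Module.finrank R S * (u * v)
          = (𝔞 ^ Module.finrank R S * u) * (𝔠 ^ Module.finrank R S * v) := by ring
        _ = Ideal.relNorm R (Ideal.map (algebraMap R S) 𝔞) *
              Ideal.relNorm R (Ideal.map (algebraMap R S) 𝔠) := by rw [← hu, ← hv]
        _ = Ideal.relNorm R (Ideal.map (algebraMap R S) (Ideal.span {β})) := by
              rw [h𝔠, Ideal.map_mul, _root_.map_mul]
        _ = Ideal.span {β} ^ Module.finrank R S := hprin β
        _ = 𝔞 ^ Module.finrank R S * 𝔠 ^ Module.finrank R S := by rw [h𝔠, mul_pow]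
    have hprod0 : 𝔞 ^ Module.finrank R S * 𝔠 ^ Module.finrank R S ≠ 0 := by
      rw [← mul_pow, ← h𝔠]
      exact pow_ne_zero _ (by simpa [Ideal.zero_eq_bot, Ideal.span_singleton_eq_bot] using hβ0)
    have huv : u * v = 1 := mul_left_cancel₀ hprod0 hmul
    have hunit : IsUnit u := IsUnit.of_mul_eq_one _ huv
    rw [hu, Ideal.isUnit_iff.mp hunit, Ideal.mul_top]

/-- The rank of rings of integers agrees with the rank of the field extension. -/
theorem RelNormAux.finrank_ringOfIntegers_eq (F E : Type*) [Field F] [Field E] [NumberField F]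
    [NumberField E] [Algebra F E] [Module.Finite (𝓞 F) (𝓞 E)] [Module.Free (𝓞 F) (𝓞 E)] :
    Module.finrank (𝓞 F) (𝓞 E) = Module.finrank F E := by
  haveI : IsLocalization (Algebra.algebraMapSubmonoid (𝓞 E) (𝓞 F)⁰) E :=
    IsIntegralClosure.isLocalization_of_isSeparable (𝓞 F) F E (𝓞 E)
  classical
  let b := Module.Free.chooseBasis (𝓞 F) (𝓞 E)
  let b' := b.localizationLocalization F (𝓞 F)⁰ E
  rw [Module.finrank_eq_card_chooseBasisIndex, Module.finrank_eq_card_basis b']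

/-- The relative norm of a nonzero prime is a positive power of the prime below it. -/
theorem RelNormAux.relNorm_prime_eq_pow (F E : Type*) [Field F] [Field E] [NumberField F]
    [NumberField E] [Algebra F E] [Module.Finite (𝓞 F) (𝓞 E)] [Module.Free (𝓞 F) (𝓞 E)]
    (hquad : Module.finrank F E = 2)
    {𝔮 : Ideal (𝓞 E)} (hq : 𝔮.IsPrime) (hq0 : 𝔮 ≠ ⊥) :
    ∃ k, 1 ≤ k ∧
      Ideal.relNorm (𝓞 F) 𝔮 = (Ideal.comap (algebraMap (𝓞 F) (𝓞 E)) 𝔮) ^ k := by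
  haveI : Normal F E := RelNormAux.normal_of_finrank_eq_two F E hquad
  haveI : IsGalois F E := { }
  haveI : IsLocalization (Algebra.algebraMapSubmonoid (𝓞 E) (𝓞 F)⁰) E :=
    IsIntegralClosure.isLocalization_of_isSeparable (𝓞 F) F E (𝓞 E)
  set 𝔭 := Ideal.comap (algebraMap (𝓞 F) (𝓞 E)) 𝔮 with h𝔭
  have hnorm_eq : ∀ x : 𝓞 E, Algebra.norm (𝓞 F) x = RingOfIntegers.norm F x := by
    intro x
    have hloc := Algebra.norm_localization (𝓞 F) (Rₘ := F) (Sₘ := E) (𝓞 F)⁰ x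
    apply FaithfulSMul.algebraMap_injective (𝓞 F) F
    rw [← hloc]; rfl
  have hle : Ideal.relNorm (𝓞 F) 𝔮 ≤ 𝔭 := by
    rw [Ideal.relNorm_apply, Ideal.span_le]
    rintro _ ⟨x, hx, rfl⟩
    rw [SetLike.mem_coe, Ideal.mem_comap, Algebra.intNorm_eq_norm, hnorm_eq]
    obtain ⟨c, hc⟩ := RingOfIntegers.dvd_norm F x
    rw [hc]
    exact Ideal.mul_mem_right _ _ hx
  have hrel0 : Ideal.relNorm (𝓞 F) 𝔮 ≠ ⊥ := fun h => hq0 (Ideal.relNorm_eq_bot_iff.mp h)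
  have h𝔭0 : 𝔭 ≠ ⊥ := fun h => hrel0 (le_bot_iff.mp (h ▸ hle))
  haveI h𝔭p : 𝔭.IsPrime := Ideal.IsPrime.comap _
  have hdvd : Ideal.relNorm (𝓞 F) 𝔮 ∣ 𝔭 ^ Module.finrank (𝓞 F) (𝓞 E) := by
    rw [← RelNormAux.relNorm_map_eq_pow]
    exact map_dvd _ (Ideal.dvd_iff_le.mpr Ideal.map_comap_le)
  obtain ⟨k, hk, hassoc⟩ := (dvd_prime_pow (Ideal.prime_of_isPrime h𝔭0 h𝔭p) _).mp hdvd
  have heq : Ideal.relNorm (𝓞 F) 𝔮 = 𝔭 ^ k := associated_iff_eq.mp hassoc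
  refine ⟨k, ?_, heq⟩
  rcases Nat.eq_zero_or_pos k with rfl | h1
  · exfalso
    rw [pow_zero, Ideal.one_eq_top] at heq
    exact h𝔭p.ne_top (top_le_iff.mp (heq ▸ hle))
  · exact h1

/-- The absolute norm of a nonzero prime ideal is a positive power of a rational prime
that belongs to the ideal. -/
theorem RelNormAux.absNorm_prime_eq_pow {F : Type*} [Field F] [NumberField F]
    {𝔭 : Ideal (𝓞 F)} (hp : 𝔭.IsPrime) (hp0 : 𝔭 ≠ ⊥) :
    ∃ q k, Nat.Prime q ∧ 1 ≤ k ∧ Ideal.absNorm 𝔭 = q ^ k ∧ (q : 𝓞 F) ∈ 𝔭 := by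
  have hfin : Finite ((𝓞 F) ⧸ 𝔭) := by
    rw [← Ideal.absNorm_ne_zero_iff]
    simpa [Ideal.absNorm_eq_zero_iff] using hp0
  cases nonempty_fintype ((𝓞 F) ⧸ 𝔭)
  haveI : 𝔭.IsPrime := hp
  set q := ringChar ((𝓞 F) ⧸ 𝔭) with hqdef
  have hqprime : Nat.Prime q := CharP.char_is_prime ((𝓞 F) ⧸ 𝔭) q
  haveI : Fact (Nat.Prime q) := ⟨hqprime⟩
  letI : Module (ZMod q) ((𝓞 F) ⧸ 𝔭) :=
    { (ZMod.castHom dvd_rfl ((𝓞 F) ⧸ 𝔭) : ZMod q →+* _).toModule with }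
  obtain ⟨n, hn⟩ := VectorSpace.card_fintype (ZMod q) ((𝓞 F) ⧸ 𝔭)
  rw [ZMod.card] at hn
  have hn1 : 1 ≤ n := by
    rcases Nat.eq_zero_or_pos n with rfl | h
    · exfalso
      rw [pow_zero] at hn
      exact (Fintype.one_lt_card (α := (𝓞 F) ⧸ 𝔭)).ne' hn
    · exact h
  refine ⟨q, n, hqprime, hn1, ?_, ?_⟩
  · rw [Ideal.absNorm_apply, Submodule.cardQuot_apply, Nat.card_eq_fintype_card, hn]
  · rw [← Ideal.Quotient.eq_zero_iff_mem, map_natCast]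
    exact CharP.cast_eq_zero _ q

/-- Divisor-counting bound for the number of prime-power divisors of a nonzero ideal. -/
theorem RelNormAux.prod_succ_count_le {F : Type*} [Field F] [NumberField F] [DecidableEq (Ideal (𝓞 F))]
    (𝔞 : Ideal (𝓞 F)) (h𝔞 : 𝔞 ≠ ⊥) :
    ∏ 𝔭 ∈ (normalizedFactors 𝔞).toFinset,
        (Multiset.count 𝔭 (normalizedFactors 𝔞) + 1) ≤
      (Ideal.absNorm 𝔞).divisors.card ^ Module.finrank ℚ F := by
  classical
  set d := Module.finrank ℚ F with hd
  set m := Ideal.absNorm 𝔞 with hm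
  set A := normalizedFactors 𝔞 with hA
  set S := A.toFinset with hS
  have hm0 : m ≠ 0 := by simpa [hm, Ideal.absNorm_eq_zero_iff] using h𝔞
  have hSfact : ∀ 𝔭 ∈ S, 𝔭.IsPrime ∧ 𝔭 ≠ ⊥ := by
    intro 𝔭 h
    have hmem := Multiset.mem_toFinset.mp h
    exact ⟨((Ideal.mem_normalizedFactors_iff h𝔞).mp hmem).1,
      (prime_of_normalized_factor 𝔭 hmem).ne_zero⟩
  have hex : ∀ 𝔭 : Ideal (𝓞 F), ∃ q k, (𝔭.IsPrime ∧ 𝔭 ≠ ⊥) →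
      (Nat.Prime q ∧ 1 ≤ k ∧ Ideal.absNorm 𝔭 = q ^ k ∧ (q : 𝓞 F) ∈ 𝔭) := by
    intro 𝔭
    by_cases h : 𝔭.IsPrime ∧ 𝔭 ≠ ⊥
    · obtain ⟨q, k, h1, h2, h3, h4⟩ := RelNormAux.absNorm_prime_eq_pow h.1 h.2
      exact ⟨q, k, fun _ => ⟨h1, h2, h3, h4⟩⟩
    · exact ⟨0, 0, fun hc => absurd hc h⟩
  choose qf kf hspec using hex
  -- each 𝔭 in S divides 𝔞
  have hdvd𝔞 : ∀ 𝔭 ∈ S, 𝔭 ∣ 𝔞 := fun 𝔭 h =>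
    dvd_of_mem_normalizedFactors (Multiset.mem_toFinset.mp h)
  have himg : ∀ 𝔭 ∈ S, qf 𝔭 ∈ m.primeFactors := by
    intro 𝔭 h
    obtain ⟨h1, h2, h3, _⟩ := hspec 𝔭 (hSfact 𝔭 h)
    refine Nat.mem_primeFactors.mpr ⟨h1, ?_, hm0⟩
    have : Ideal.absNorm 𝔭 ∣ m := map_dvd _ (hdvd𝔞 𝔭 h)
    exact dvd_trans (h3 ▸ dvd_pow_self _ (by omega)) this
  have hcle : ∀ 𝔭 ∈ S, Multiset.count 𝔭 A ≤ m.factorization (qf 𝔭) := by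
    intro 𝔭 h
    obtain ⟨h1, h2, h3, _⟩ := hspec 𝔭 (hSfact 𝔭 h)
    have hpow : 𝔭 ^ Multiset.count 𝔭 A ∣ 𝔞 := by
      have hle : Multiset.replicate (Multiset.count 𝔭 A) 𝔭 ≤ A := by
        rw [Multiset.le_iff_count]
        intro b
        rw [Multiset.count_replicate]
        split <;> simp_all
      have := Multiset.prod_dvd_prod_of_le hle
      rwa [Multiset.prod_replicate, _root_.prod_normalizedFactors_eq_self h𝔞] at this
    have habs : Ideal.absNorm 𝔭 ^ Multiset.count 𝔭 A ∣ m := by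
      rw [← map_pow]
      exact map_dvd _ hpow
    rw [h3, ← pow_mul] at habs
    have hpdvd : (qf 𝔭) ^ Multiset.count 𝔭 A ∣ m :=
      dvd_trans (pow_dvd_pow _ (Nat.le_mul_of_pos_left _ (by omega))) habs
    exact (Nat.Prime.pow_dvd_iff_le_factorization h1 hm0).mp hpdvd
  have hfib : ∀ p : ℕ, (S.filter fun 𝔭 => qf 𝔭 = p).card ≤ d := by
    intro p
    set t := S.filter fun 𝔭 => qf 𝔭 = p with ht
    rcases Finset.eq_empty_or_nonempty t with h | ⟨𝔭₁, h𝔭₁⟩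
    · simp [h]
    have h𝔭₁S : 𝔭₁ ∈ S := (Finset.mem_filter.mp h𝔭₁).1
    have hp : p = qf 𝔭₁ := ((Finset.mem_filter.mp h𝔭₁).2).symm
    have hpprime : Nat.Prime p := hp ▸ (hspec 𝔭₁ (hSfact _ h𝔭₁S)).1
    set sp := Ideal.span {(p : 𝓞 F)} with hsp
    have hproddvd : (∏ 𝔭 ∈ t, 𝔭) ∣ sp := by
      refine Finset.prod_primes_dvd sp ?_ ?_
      · intro 𝔭 h𝔭
        have hS𝔭 := (Finset.mem_filter.mp h𝔭).1
        exact Ideal.prime_of_isPrime (hSfact _ hS𝔭).2 (hSfact _ hS𝔭).1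
      · intro 𝔭 h𝔭
        have hS𝔭 := (Finset.mem_filter.mp h𝔭).1
        have hqp : qf 𝔭 = p := (Finset.mem_filter.mp h𝔭).2
        obtain ⟨_, _, _, hmem⟩ := hspec 𝔭 (hSfact _ hS𝔭)
        rw [Ideal.dvd_iff_le, hsp, Ideal.span_singleton_le_iff_mem]
        rw [← hqp]
        exact hmem
    have habs1 : Ideal.absNorm (∏ 𝔭 ∈ t, 𝔭) = p ^ (∑ 𝔭 ∈ t, kf 𝔭) := by
      rw [map_prod, ← Finset.prod_pow_eq_pow_sum]
      refine Finset.prod_congr rfl ?_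
      intro 𝔭 h𝔭
      have hS𝔭 := (Finset.mem_filter.mp h𝔭).1
      have hqp : qf 𝔭 = p := (Finset.mem_filter.mp h𝔭).2
      rw [(hspec 𝔭 (hSfact _ hS𝔭)).2.2.1, hqp]
    have habs2 : Ideal.absNorm sp = p ^ d := by
      rw [hsp, Ideal.absNorm_span_singleton]
      have hcast : ((p : ℕ) : 𝓞 F) = algebraMap ℤ (𝓞 F) (p : ℤ) := by push_cast; rfl
      rw [hcast, Algebra.norm_algebraMap_of_basis (Module.Free.chooseBasis ℤ (𝓞 F))]
      rw [← Module.finrank_eq_card_chooseBasisIndex, NumberField.RingOfIntegers.rank]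
      push_cast
      rw [Int.natAbs_pow]
      simp
      rfl
    have hsum : p ^ (∑ 𝔭 ∈ t, kf 𝔭) ∣ p ^ d := by
      rw [← habs1, ← habs2]
      exact map_dvd _ hproddvd
    have hsumle : (∑ 𝔭 ∈ t, kf 𝔭) ≤ d :=
      (Nat.pow_dvd_pow_iff_le_right hpprime.one_lt).mp hsum
    have hcard : t.card ≤ ∑ 𝔭 ∈ t, kf 𝔭 := by
      rw [Finset.card_eq_sum_ones]
      refine Finset.sum_le_sum ?_
      intro 𝔭 h𝔭
      exact (hspec 𝔭 (hSfact _ (Finset.mem_filter.mp h𝔭).1)).2.1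
    omega
  -- master chain
  calc ∏ 𝔭 ∈ S, (Multiset.count 𝔭 A + 1)
      ≤ ∏ 𝔭 ∈ S, (m.factorization (qf 𝔭) + 1) := by
        refine Finset.prod_le_prod (fun _ _ => Nat.zero_le _) ?_
        intro 𝔭 h
        have := hcle 𝔭 h
        omega
    _ = ∏ p ∈ S.image qf, ∏ 𝔭 ∈ S.filter (fun 𝔭 => qf 𝔭 = p), (m.factorization (qf 𝔭) + 1) :=
        (Finset.prod_fiberwise_of_maps_to (fun 𝔭 h => Finset.mem_image_of_mem qf h) _).symm
    _ = ∏ p ∈ S.image qf, (m.factorization p + 1) ^ (S.filter (fun 𝔭 => qf 𝔭 = p)).card := by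
        refine Finset.prod_congr rfl ?_
        intro p hp
        rw [← Finset.prod_const]
        refine Finset.prod_congr rfl ?_
        intro 𝔭 h𝔭
        rw [(Finset.mem_filter.mp h𝔭).2]
    _ ≤ ∏ p ∈ S.image qf, (m.factorization p + 1) ^ d := by
        refine Finset.prod_le_prod (fun _ _ => Nat.zero_le _) ?_
        intro p hp
        exact Nat.pow_le_pow_right (by omega) (hfib p)
    _ = (∏ p ∈ S.image qf, (m.factorization p + 1)) ^ d := Finset.prod_pow _ _ _
    _ ≤ (∏ p ∈ m.primeFactors, (m.factorization p + 1)) ^ d := by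
        refine Nat.pow_le_pow_left ?_ d
        refine Finset.prod_le_prod_of_subset_of_one_le' ?_ ?_
        · intro p hp
          obtain ⟨𝔭, h𝔭, rfl⟩ := Finset.mem_image.mp hp
          exact himg 𝔭 h𝔭
        · intro p _ _
          omega
    _ = m.divisors.card ^ d := by
        rw [Nat.card_divisors hm0]

end Aux

open Ideal UniqueFactorizationMonoid in
/-- Estimate (eqn:divisor) in the proof of Lemma 6.2 (lemQ): for a quadratic extension `E/F`
of number fields and a nonzero ideal `𝔞` of `O_F`, the number of ideals `𝔟` of `O_E` with
relative norm `N_{E/F}(𝔟) = 𝔞` is at most `σ₀(N(𝔞))^{[F:ℚ]}`. -/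
theorem card_ideals_with_relNorm_le
    (F E : Type*) [Field F] [Field E] [NumberField F] [NumberField E] [Algebra F E]
    (hquad : Module.finrank F E = 2)
    [Module.Finite (𝓞 F) (𝓞 E)] [Module.Free (𝓞 F) (𝓞 E)]
    (𝔞 : Ideal (𝓞 F)) (h𝔞 : 𝔞 ≠ ⊥) :
    {𝔟 : Ideal (𝓞 E) | Ideal.relNorm (𝓞 F) 𝔟 = 𝔞}.Finite ∧
    {𝔟 : Ideal (𝓞 E) | Ideal.relNorm (𝓞 F) 𝔟 = 𝔞}.ncard ≤
      (Ideal.absNorm 𝔞).divisors.card ^ Module.finrank ℚ F := by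
  classical
  have hn2 : Module.finrank (𝓞 F) (𝓞 E) = 2 := by
    rw [RelNormAux.finrank_ringOfIntegers_eq F E, hquad]
  set R : Set (Ideal (𝓞 E)) := {𝔟 : Ideal (𝓞 E) | Ideal.relNorm (𝓞 F) 𝔟 = 𝔞} with hRdef
  set A := normalizedFactors 𝔞 with hA
  set S := A.toFinset with hS
  set g : Ideal (𝓞 F) → Ideal (𝓞 E) → ℕ := fun 𝔭₀ 𝔮 =>
    Multiset.count 𝔭₀ (normalizedFactors (Ideal.relNorm (𝓞 F) 𝔮)) with hgdef
  -- properties of g on primes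
  have hgspec : ∀ 𝔮 : Ideal (𝓞 E), 𝔮.IsPrime → 𝔮 ≠ ⊥ →
      (1 ≤ g (Ideal.comap (algebraMap (𝓞 F) (𝓞 E)) 𝔮) 𝔮 ∧
       ∀ 𝔭₀, 𝔭₀ ≠ Ideal.comap (algebraMap (𝓞 F) (𝓞 E)) 𝔮 → g 𝔭₀ 𝔮 = 0) := by
    intro 𝔮 hq hq0
    obtain ⟨k, hk1, heq⟩ := RelNormAux.relNorm_prime_eq_pow F E hquad hq hq0
    have h𝔭0 : Ideal.comap (algebraMap (𝓞 F) (𝓞 E)) 𝔮 ≠ ⊥ := by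
      intro h
      rw [h, ← Ideal.zero_eq_bot, zero_pow (by omega)] at heq
      exact hq0 (Ideal.relNorm_eq_bot_iff.mp (by rw [heq, Ideal.zero_eq_bot]))
    haveI h𝔭p : (Ideal.comap (algebraMap (𝓞 F) (𝓞 E)) 𝔮).IsPrime := Ideal.IsPrime.comap _
    have hirr : Irreducible (Ideal.comap (algebraMap (𝓞 F) (𝓞 E)) 𝔮) :=
      (Ideal.prime_of_isPrime h𝔭0 h𝔭p).irreducible
    have hnf : normalizedFactors (Ideal.relNorm (𝓞 F) 𝔮)
        = Multiset.replicate k (Ideal.comap (algebraMap (𝓞 F) (𝓞 E)) 𝔮) := by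
      rw [heq, hirr.normalizedFactors_pow, normalize_eq]
    constructor
    · simp only [hgdef, hnf, Multiset.count_replicate, if_pos rfl]
      exact hk1
    · intro 𝔭₀ hne
      simp only [hgdef, hnf, Multiset.count_replicate]
      exact if_neg fun h => hne h.symm
  -- counting relation
  have hcount : ∀ 𝔟 : Ideal (𝓞 E), 𝔟 ≠ ⊥ → ∀ 𝔭₀ : Ideal (𝓞 F),
      Multiset.count 𝔭₀ (normalizedFactors (Ideal.relNorm (𝓞 F) 𝔟))
        = ((normalizedFactors 𝔟).map (g 𝔭₀)).sum := by
    intro 𝔟 h𝔟 𝔭₀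
    conv_lhs => rw [← _root_.prod_normalizedFactors_eq_self h𝔟]
    rw [map_multiset_prod (Ideal.relNorm (𝓞 F)),
      UniqueFactorizationMonoid.normalizedFactors_multiset_prod _ (by
        intro hmem
        obtain ⟨𝔮, h𝔮, h0⟩ := Multiset.mem_map.mp hmem
        exact (prime_of_normalized_factor 𝔮 h𝔮).ne_zero
          (Ideal.relNorm_eq_bot_iff.mp (by rw [h0, Ideal.zero_eq_bot]))),
      Multiset.map_map, Multiset.count_sum]
    rfl
  -- choice of a prime above each prime
  have hQex : ∀ 𝔭 : Ideal (𝓞 F), ∃ 𝔮 : Ideal (𝓞 E), 𝔭.IsPrime → 𝔭 ≠ ⊥ →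
      (𝔮.IsPrime ∧ 𝔮 ≠ ⊥ ∧ Ideal.comap (algebraMap (𝓞 F) (𝓞 E)) 𝔮 = 𝔭) := by
    intro 𝔭
    by_cases hp : 𝔭.IsPrime ∧ 𝔭 ≠ ⊥
    · obtain ⟨hp1, hp2⟩ := hp
      have hrel : Ideal.relNorm (𝓞 F) (Ideal.map (algebraMap (𝓞 F) (𝓞 E)) 𝔭)
          = 𝔭 ^ Module.finrank (𝓞 F) (𝓞 E) := RelNormAux.relNorm_map_eq_pow 𝔭
      have hm0 : Ideal.map (algebraMap (𝓞 F) (𝓞 E)) 𝔭 ≠ 0 := by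
        intro h
        rw [h, Ideal.zero_eq_bot, Ideal.relNorm_bot] at hrel
        exact pow_ne_zero _ (by rwa [Ideal.zero_eq_bot] : (𝔭 : Ideal (𝓞 F)) ≠ 0) hrel.symm
      have hmu : ¬ IsUnit (Ideal.map (algebraMap (𝓞 F) (𝓞 E)) 𝔭) := by
        intro h
        rw [Ideal.isUnit_iff.mp h, Ideal.relNorm_top] at hrel
        have hle : (⊤ : Ideal (𝓞 F)) ≤ 𝔭 := by
          rw [hrel]
          exact Ideal.pow_le_self (by rw [hn2]; omega)
        exact hp1.ne_top (top_le_iff.mp hle)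
      obtain ⟨i, hiirr, hidvd⟩ := WfDvdMonoid.exists_irreducible_factor hmu hm0
      have hiprime : Prime i := (UniqueFactorizationMonoid.irreducible_iff_prime).mp hiirr
      haveI hip : i.IsPrime := Ideal.isPrime_of_prime hiprime
      refine ⟨i, fun _ _ => ⟨hip, hiprime.ne_zero, ?_⟩⟩
      have hle : Ideal.map (algebraMap (𝓞 F) (𝓞 E)) 𝔭 ≤ i := Ideal.le_of_dvd hidvd
      have h1 : 𝔭 ≤ Ideal.comap (algebraMap (𝓞 F) (𝓞 E)) i := Ideal.map_le_iff_le_comap.mp hle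
      haveI : (Ideal.comap (algebraMap (𝓞 F) (𝓞 E)) i).IsPrime := Ideal.IsPrime.comap _
      exact ((hp1.isMaximal hp2).eq_of_le this.ne_top h1).symm
    · exact ⟨⊥, fun h1 h2 => absurd ⟨h1, h2⟩ hp⟩
  choose Q hQ using hQex
  -- no three distinct primes above a common prime
  have hthree : ∀ 𝔭₀ : Ideal (𝓞 F), 𝔭₀.IsPrime → 𝔭₀ ≠ ⊥ →
      ∀ x y z : Ideal (𝓞 E),
      x.IsPrime → x ≠ ⊥ → Ideal.comap (algebraMap (𝓞 F) (𝓞 E)) x = 𝔭₀ →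
      y.IsPrime → y ≠ ⊥ → Ideal.comap (algebraMap (𝓞 F) (𝓞 E)) y = 𝔭₀ →
      z.IsPrime → z ≠ ⊥ → Ideal.comap (algebraMap (𝓞 F) (𝓞 E)) z = 𝔭₀ →
      x ≠ y → x ≠ z → y ≠ z → False := by
    intro 𝔭₀ hp hp0 x y z hx hx0 hcx hy hy0 hcy hz hz0 hcz hxy hxz hyz
    have hrel : Ideal.relNorm (𝓞 F) (Ideal.map (algebraMap (𝓞 F) (𝓞 E)) 𝔭₀)
        = 𝔭₀ ^ Module.finrank (𝓞 F) (𝓞 E) := RelNormAux.relNorm_map_eq_pow 𝔭₀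
    have hm0 : Ideal.map (algebraMap (𝓞 F) (𝓞 E)) 𝔭₀ ≠ ⊥ := by
      intro h
      rw [h, Ideal.relNorm_bot] at hrel
      exact pow_ne_zero _ (by rwa [Ideal.zero_eq_bot] : (𝔭₀ : Ideal (𝓞 F)) ≠ 0)
        (by rw [← Ideal.zero_eq_bot] at hrel; exact hrel.symm)
    have hirr : Irreducible 𝔭₀ := (Ideal.prime_of_isPrime hp0 hp).irreducible
    -- count is 2
    have h2 : Multiset.count 𝔭₀
        (normalizedFactors (Ideal.relNorm (𝓞 F) (Ideal.map (algebraMap (𝓞 F) (𝓞 E)) 𝔭₀)))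
        = 2 := by
      rw [hrel, hirr.normalizedFactors_pow, normalize_eq, Multiset.count_replicate,
        if_pos rfl, hn2]
    set s := normalizedFactors (Ideal.map (algebraMap (𝓞 F) (𝓞 E)) 𝔭₀) with hsdef
    have hsum : Multiset.count 𝔭₀
        (normalizedFactors (Ideal.relNorm (𝓞 F) (Ideal.map (algebraMap (𝓞 F) (𝓞 E)) 𝔭₀)))
        = ∑ a ∈ s.toFinset, s.count a • g 𝔭₀ a := by
      rw [hcount _ hm0 𝔭₀, Finset.sum_multiset_map_count]
    have hmem : ∀ w : Ideal (𝓞 E), w.IsPrime →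
        Ideal.comap (algebraMap (𝓞 F) (𝓞 E)) w = 𝔭₀ → w ∈ s.toFinset := by
      intro w hw hcw
      rw [Multiset.mem_toFinset, Ideal.mem_normalizedFactors_iff hm0]
      exact ⟨hw, Ideal.map_le_iff_le_comap.mpr (by rw [hcw])⟩
    have hterm : ∀ w : Ideal (𝓞 E), w.IsPrime → w ≠ ⊥ →
        Ideal.comap (algebraMap (𝓞 F) (𝓞 E)) w = 𝔭₀ → 1 ≤ s.count w • g 𝔭₀ w := by
      intro w hw hw0 hcw
      have h1 : 1 ≤ s.count w := Multiset.one_le_count_iff_mem.mpr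
        (Multiset.mem_toFinset.mp (hmem w hw hcw))
      have hg1 : 1 ≤ g 𝔭₀ w := by
        have := (hgspec w hw hw0).1
        rwa [hcw] at this
      rw [smul_eq_mul]
      calc 1 = 1 * 1 := by omega
        _ ≤ s.count w * g 𝔭₀ w := Nat.mul_le_mul h1 hg1
    have hsub : ({x, y, z} : Finset (Ideal (𝓞 E))) ⊆ s.toFinset := by
      intro w hw
      simp only [Finset.mem_insert, Finset.mem_singleton] at hw
      rcases hw with rfl | rfl | rfl
      · exact hmem _ hx hcx
      · exact hmem _ hy hcy
      · exact hmem _ hz hcz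
    have h3le : 3 ≤ ∑ a ∈ ({x, y, z} : Finset (Ideal (𝓞 E))), s.count a • g 𝔭₀ a := by
      rw [Finset.sum_insert (by simp [hxy, hxz]), Finset.sum_insert (by simp [hyz]),
        Finset.sum_singleton]
      have := hterm x hx hx0 hcx
      have := hterm y hy hy0 hcy
      have := hterm z hz hz0 hcz
      omega
    have hmono : ∑ a ∈ ({x, y, z} : Finset (Ideal (𝓞 E))), s.count a • g 𝔭₀ a
        ≤ ∑ a ∈ s.toFinset, s.count a • g 𝔭₀ a :=
      Finset.sum_le_sum_of_subset hsub
    omega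
  -- facts about S
  have hSfact : ∀ 𝔭 ∈ S, 𝔭.IsPrime ∧ 𝔭 ≠ ⊥ := by
    intro 𝔭 h
    have hmem := Multiset.mem_toFinset.mp h
    exact ⟨((Ideal.mem_normalizedFactors_iff h𝔞).mp hmem).1,
      (prime_of_normalized_factor 𝔭 hmem).ne_zero⟩
  -- elements of R are nonzero
  have hb0 : ∀ 𝔟 ∈ R, 𝔟 ≠ ⊥ := by
    intro 𝔟 h𝔟 hbot
    rw [hRdef, Set.mem_setOf_eq, hbot, Ideal.relNorm_bot] at h𝔟
    exact h𝔞 h𝔟.symm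
  -- master sum identity, specialized
  have hAcount : ∀ 𝔟 ∈ R, ∀ 𝔭₀ : Ideal (𝓞 F),
      Multiset.count 𝔭₀ A = ∑ a ∈ (normalizedFactors 𝔟).toFinset,
        (normalizedFactors 𝔟).count a • g 𝔭₀ a := by
    intro 𝔟 h𝔟 𝔭₀
    have hrel : Ideal.relNorm (𝓞 F) 𝔟 = 𝔞 := h𝔟
    rw [hA, ← hrel, hcount 𝔟 (hb0 𝔟 h𝔟) 𝔭₀, Finset.sum_multiset_map_count]
  -- the exponent bound
  have hbound : ∀ 𝔟 ∈ R, ∀ 𝔭 ∈ S,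
      Multiset.count (Q 𝔭) (normalizedFactors 𝔟) ≤ Multiset.count 𝔭 A := by
    intro 𝔟 hbR 𝔭 hpS
    obtain ⟨hp, hp0⟩ := hSfact 𝔭 hpS
    obtain ⟨hQp, hQ0, hQc⟩ := hQ 𝔭 hp hp0
    rcases Nat.eq_zero_or_pos (Multiset.count (Q 𝔭) (normalizedFactors 𝔟)) with h0 | hpos
    · omega
    · have hmem : Q 𝔭 ∈ (normalizedFactors 𝔟).toFinset :=
        Multiset.mem_toFinset.mpr (Multiset.count_pos.mp hpos)
      have h1 := hAcount 𝔟 hbR 𝔭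
      have h2 : (normalizedFactors 𝔟).count (Q 𝔭) • g 𝔭 (Q 𝔭)
          ≤ ∑ a ∈ (normalizedFactors 𝔟).toFinset, (normalizedFactors 𝔟).count a • g 𝔭 a :=
        Finset.single_le_sum (f := fun a => (normalizedFactors 𝔟).count a • g 𝔭 a)
          (fun i _ => Nat.zero_le _) hmem
      have hg1 : 1 ≤ g 𝔭 (Q 𝔭) := by
        have := (hgspec (Q 𝔭) hQp hQ0).1
        rwa [hQc] at this
      have : (normalizedFactors 𝔟).count (Q 𝔭) ≤ (normalizedFactors 𝔟).count (Q 𝔭) • g 𝔭 (Q 𝔭) := by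
        rw [smul_eq_mul]
        exact Nat.le_mul_of_pos_right _ (by omega)
      omega
  -- injectivity
  have hinj : ∀ 𝔟 ∈ R, ∀ 𝔟' ∈ R,
      (∀ 𝔭 ∈ S, Multiset.count (Q 𝔭) (normalizedFactors 𝔟)
        = Multiset.count (Q 𝔭) (normalizedFactors 𝔟')) → 𝔟 = 𝔟' := by
    intro 𝔟 hb 𝔟' hb' hEq
    have h𝔟0 := hb0 𝔟 hb
    have h𝔟'0 := hb0 𝔟' hb'
    rw [← _root_.prod_normalizedFactors_eq_self h𝔟0, ← _root_.prod_normalizedFactors_eq_self h𝔟'0]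
    congr 1
    ext 𝔮₀
    by_cases hmem : 𝔮₀ ∈ normalizedFactors 𝔟 ∨ 𝔮₀ ∈ normalizedFactors 𝔟'
    swap
    · push_neg at hmem
      rw [Multiset.count_eq_zero_of_notMem hmem.1, Multiset.count_eq_zero_of_notMem hmem.2]
    · have h𝔮₀ : 𝔮₀.IsPrime ∧ 𝔮₀ ≠ ⊥ := by
        rcases hmem with h | h
        · exact ⟨((Ideal.mem_normalizedFactors_iff h𝔟0).mp h).1,
            (prime_of_normalized_factor 𝔮₀ h).ne_zero⟩
        · exact ⟨((Ideal.mem_normalizedFactors_iff h𝔟'0).mp h).1,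
            (prime_of_normalized_factor 𝔮₀ h).ne_zero⟩
      obtain ⟨hq0p, hq00⟩ := h𝔮₀
      set 𝔭₀ := Ideal.comap (algebraMap (𝓞 F) (𝓞 E)) 𝔮₀ with hp₀def
      have hgq₀ : 1 ≤ g 𝔭₀ 𝔮₀ := (hgspec 𝔮₀ hq0p hq00).1
      by_cases hpS : 𝔭₀ ∈ S
      · obtain ⟨hp₀p, hp₀0⟩ := hSfact 𝔭₀ hpS
        obtain ⟨hQ1p, hQ10, hQ1c⟩ := hQ 𝔭₀ hp₀p hp₀0
        by_cases h01 : 𝔮₀ = Q 𝔭₀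
        · rw [h01]
          exact hEq 𝔭₀ hpS
        · -- master identity
          have hmaster : ∀ 𝔟'' ∈ R, Multiset.count 𝔭₀ A =
              (normalizedFactors 𝔟'').count 𝔮₀ * g 𝔭₀ 𝔮₀
                + (normalizedFactors 𝔟'').count (Q 𝔭₀) * g 𝔭₀ (Q 𝔭₀) := by
            intro 𝔟'' hb''
            have h𝔟''0 := hb0 𝔟'' hb''
            have h1 := hAcount 𝔟'' hb'' 𝔭₀
            have h2 : ∑ a ∈ (normalizedFactors 𝔟'').toFinset, (normalizedFactors 𝔟'').count a • g 𝔭₀ a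
                = ∑ a ∈ (normalizedFactors 𝔟'').toFinset ∪ {𝔮₀, Q 𝔭₀}, (normalizedFactors 𝔟'').count a • g 𝔭₀ a := by
              refine Finset.sum_subset Finset.subset_union_left ?_
              intro w hw hnw
              rw [Multiset.count_eq_zero_of_notMem
                (fun hm => hnw (Multiset.mem_toFinset.mpr hm)), zero_smul]
            have h3 : ∑ a ∈ (normalizedFactors 𝔟'').toFinset ∪ {𝔮₀, Q 𝔭₀}, (normalizedFactors 𝔟'').count a • g 𝔭₀ a
                = ∑ a ∈ ({𝔮₀, Q 𝔭₀} : Finset (Ideal (𝓞 E))), (normalizedFactors 𝔟'').count a • g 𝔭₀ a := by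
              symm
              refine Finset.sum_subset Finset.subset_union_right ?_
              intro w hw hnw
              simp only [Finset.mem_insert, Finset.mem_singleton, not_or] at hnw
              obtain ⟨hnw0, hnw1⟩ := hnw
              have hwS : w ∈ (normalizedFactors 𝔟'').toFinset := by
                rcases Finset.mem_union.mp hw with h | h
                · exact h
                · exact absurd h (by simp [hnw0, hnw1])
              have hwmem := Multiset.mem_toFinset.mp hwS
              have hwp : w.IsPrime := ((Ideal.mem_normalizedFactors_iff h𝔟''0).mp hwmem).1
              have hw0 : w ≠ ⊥ := (prime_of_normalized_factor w hwmem).ne_zero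
              rcases Nat.eq_zero_or_pos (g 𝔭₀ w) with hgw | hgw
              · rw [hgw, smul_zero]
              · exfalso
                have hcw : Ideal.comap (algebraMap (𝓞 F) (𝓞 E)) w = 𝔭₀ := by
                  by_contra hne
                  have := (hgspec w hwp hw0).2 𝔭₀ (fun h => hne h.symm)
                  omega
                exact hthree 𝔭₀ hp₀p hp₀0 w 𝔮₀ (Q 𝔭₀) hwp hw0 hcw hq0p hq00 rfl
                  hQ1p hQ10 hQ1c hnw0 hnw1 h01
            have h4 : ∑ a ∈ ({𝔮₀, Q 𝔭₀} : Finset (Ideal (𝓞 E))), (normalizedFactors 𝔟'').count a • g 𝔭₀ a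
                = (normalizedFactors 𝔟'').count 𝔮₀ * g 𝔭₀ 𝔮₀ + (normalizedFactors 𝔟'').count (Q 𝔭₀) * g 𝔭₀ (Q 𝔭₀) := by
              rw [Finset.sum_pair h01]
              simp [smul_eq_mul]
            omega
          have e1 := hmaster 𝔟 hb
          have e2 := hmaster 𝔟' hb'
          have e3 := hEq 𝔭₀ hpS
          rw [e3] at e1
          have hgpos : 0 < g 𝔭₀ 𝔮₀ := hgq₀
          have : (normalizedFactors 𝔟).count 𝔮₀ * g 𝔭₀ 𝔮₀
              = (normalizedFactors 𝔟').count 𝔮₀ * g 𝔭₀ 𝔮₀ := by omega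
          exact Nat.eq_of_mul_eq_mul_right hgpos this
      · -- 𝔭₀ not in S : both counts are zero
        have hAzero : Multiset.count 𝔭₀ A = 0 :=
          Multiset.count_eq_zero_of_notMem (fun h => hpS (Multiset.mem_toFinset.mpr h))
        have hzero : ∀ 𝔟'' ∈ R, Multiset.count 𝔮₀ (normalizedFactors 𝔟'') = 0 := by
          intro 𝔟'' hb''
          by_contra h0
          have hpos : 0 < (normalizedFactors 𝔟'').count 𝔮₀ := Nat.pos_of_ne_zero h0
          have hmem' : 𝔮₀ ∈ (normalizedFactors 𝔟'').toFinset :=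
            Multiset.mem_toFinset.mpr (Multiset.count_pos.mp hpos)
          have h1 := hAcount 𝔟'' hb'' 𝔭₀
          have h2 : (normalizedFactors 𝔟'').count 𝔮₀ • g 𝔭₀ 𝔮₀
              ≤ ∑ a ∈ (normalizedFactors 𝔟'').toFinset,
                  (normalizedFactors 𝔟'').count a • g 𝔭₀ a :=
            Finset.single_le_sum (f := fun a => (normalizedFactors 𝔟'').count a • g 𝔭₀ a)
              (fun i _ => Nat.zero_le _) hmem'
          have h3 : 1 ≤ (normalizedFactors 𝔟'').count 𝔮₀ • g 𝔭₀ 𝔮₀ := by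
            rw [smul_eq_mul]
            exact Nat.one_le_iff_ne_zero.mpr (Nat.mul_ne_zero h0 (by omega))
          omega
        rw [hzero 𝔟 hb, hzero 𝔟' hb']
  -- the injection into a finite type
  let T := ∀ 𝔭 : {x // x ∈ S}, Fin (Multiset.count 𝔭.1 A + 1)
  have hlt : ∀ (𝔟 : R) (𝔭 : {x // x ∈ S}),
      Multiset.count (Q 𝔭.1) (normalizedFactors (𝔟 : Ideal (𝓞 E))) < Multiset.count 𝔭.1 A + 1 :=
    fun 𝔟 𝔭 => Nat.lt_succ_of_le (hbound _ 𝔟.2 _ 𝔭.2)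
  let Φ : R → T := fun 𝔟 𝔭 => ⟨_, hlt 𝔟 𝔭⟩
  have hΦinj : Function.Injective Φ := by
    intro x y h
    apply Subtype.ext
    apply hinj _ x.2 _ y.2
    intro 𝔭 hp
    have := congrFun h ⟨𝔭, hp⟩
    simpa [Φ, Fin.mk.injEq] using this
  haveI hRfin : Finite R := Finite.of_injective Φ hΦinj
  refine ⟨Set.finite_coe_iff.mp hRfin, ?_⟩
  calc R.ncard = Nat.card R := rfl
    _ ≤ Nat.card T := Nat.card_le_card_of_injective Φ hΦinj
    _ = Fintype.card T := Nat.card_eq_fintype_card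
    _ = ∏ 𝔭 ∈ S.attach, (Multiset.count 𝔭.1 A + 1) := by
        rw [Fintype.card_pi]
        simp
    _ = ∏ 𝔭 ∈ S, (Multiset.count 𝔭 A + 1) := Finset.prod_attach S (fun 𝔭 => Multiset.count 𝔭 A + 1)
    _ ≤ (Ideal.absNorm 𝔞).divisors.card ^ Module.finrank ℚ F :=
        RelNormAux.prod_succ_count_le 𝔞 h𝔞
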